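/- Let A, B be bijective linear maps on a complex Hilbert space H and Φ ∈ B(H) such that ⟨x,y⟩ = ⟨Ax, Φ(By)⟩ for all x, y ∈ H. Then A is bounded (has closed graph, hence continuous), A*ΦB = I, and Φ* is invertible. -/

import Mathlib

open scoped InnerProductSpace Pointwise
open ContinuousLinearMap

variable {H : Type*} [NormedAddCommGroup H] [InnerProductSpace ℂ H] [CompleteSpace H]

/-- The local resolvent set of `T` at `x`. -/
def localResolvent (T : H →L[ℂ] H) (x : H) : Set ℂ :=
  {μ | ∃ U : Set ℂ, IsOpen U ∧ μ ∈ U ∧ ∃ f : ℂ → H, AnalyticOnNhd ℂ f U ∧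
      ∀ z ∈ U, z • f z - T (f z) = x}

/-- The local spectrum of `T` at `x`. -/
def localSpectrum (T : H →L[ℂ] H) (x : H) : Set ℂ := (localResolvent T x)ᶜ

/-- The local spectral subspace `H_T(F)`. -/
def localSubspace (T : H →L[ℂ] H) (F : Set ℂ) : Set H :=
  {x | localSpectrum T x ⊆ F}

/-- The rank-one operator `x ⊗ y : z ↦ ⟨z,y⟩x` (inner product conjugate-linear in
the second variable, i.e. `⟪y, z⟫` in Mathlib's convention). -/
noncomputable def rankOne (x y : H) : H →L[ℂ] H := (innerSL ℂ y).smulRight x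

/-- The single-valued extension property. -/
def HasSVEP (T : H →L[ℂ] H) : Prop :=
  ∀ U : Set ℂ, IsOpen U → ∀ f : ℂ → H, AnalyticOnNhd ℂ f U →
    (∀ μ ∈ U, μ • f μ - T (f μ) = 0) → ∀ μ ∈ U, f μ = 0

theorem stmt18 (A B : H →ₗ[ℂ] H) (hA : Function.Bijective A)
    (hB : Function.Bijective B) (Φ : H →L[ℂ] H)
    (h : ∀ x y : H, ⟪y, x⟫_ℂ = ⟪Φ (B y), A x⟫_ℂ) :
    Continuous A ∧
    ∃ A' : H →L[ℂ] H, (∀ x, A' x = A x) ∧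
      (∀ y : H, ContinuousLinearMap.adjoint A' (Φ (B y)) = y) ∧
      ∃ Ψ : H →L[ℂ] H,
        ContinuousLinearMap.adjoint Φ * Ψ = 1 ∧ Ψ * ContinuousLinearMap.adjoint Φ = 1 := by
  -- totality of {Φ (B y)}
  have htotal : ∀ w : H, (∀ y : H, ⟪Φ (B y), w⟫_ℂ = 0) → w = 0 := by
    intro w hw
    obtain ⟨x, hx⟩ := hA.2 w
    have hx0 : x = 0 := by
      have h1 : ⟪x, x⟫_ℂ = 0 := by rw [h x x, hx]; exact hw x
      exact inner_self_eq_zero.mp h1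
    rw [← hx, hx0, map_zero]
  -- closed graph
  have hgraph : (A.graph : Set (H × H)) =
      ⋂ y : H, {p : H × H | ⟪Φ (B y), p.2⟫_ℂ - ⟪y, p.1⟫_ℂ = 0} := by
    ext p
    simp only [SetLike.mem_coe, LinearMap.mem_graph_iff, Set.mem_iInter, Set.mem_setOf_eq,
      sub_eq_zero]
    constructor
    · intro hp y; rw [hp]; exact (h p.1 y).symm
    · intro hp
      have h2 : ∀ y : H, ⟪Φ (B y), p.2 - A p.1⟫_ℂ = 0 := by
        intro y; rw [inner_sub_right, hp y, h p.1 y, sub_self]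
      exact sub_eq_zero.mp (htotal _ h2)
  have hclosed : IsClosed (A.graph : Set (H × H)) := by
    rw [hgraph]
    refine isClosed_iInter fun y => isClosed_eq ?_ continuous_const
    exact Continuous.sub
      ((innerSL ℂ (Φ (B y))).continuous.comp continuous_snd)
      ((innerSL ℂ y).continuous.comp continuous_fst)
  have hAc : Continuous A := A.continuous_of_isClosed_graph hclosed
  have hone : adjoint (1 : H →L[ℂ] H) = 1 := by
    rw [ContinuousLinearMap.one_def, ContinuousLinearMap.adjoint_id]
  refine ⟨hAc, ?_⟩
  set A' : H →L[ℂ] H := ⟨A, hAc⟩ with hA'def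
  have hA'app : ∀ x, A' x = A x := fun _ => rfl
  have hadj : ∀ y : H, ContinuousLinearMap.adjoint A' (Φ (B y)) = y := by
    intro y
    apply ext_inner_right ℂ
    intro x
    rw [adjoint_inner_left]
    exact (h x y).symm
  refine ⟨A', hA'app, hadj, ?_⟩
  -- A' is a continuous bijection, build its inverse
  have hA'bij : Function.Bijective A' := hA
  let eA : H ≃L[ℂ] H := ContinuousLinearEquiv.ofBijective A'
    (LinearMap.ker_eq_bot.mpr hA'bij.1) (LinearMap.range_eq_top.mpr hA'bij.2)
  have heA : (eA : H →L[ℂ] H) = A' := rfl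
  have hcomp1 : A' ∘L (eA.symm : H →L[ℂ] H) = 1 := by
    ext x; simp [← heA]
  have hcomp2 : (eA.symm : H →L[ℂ] H) ∘L A' = 1 := by
    ext x; simp [← heA]
  -- adjoint A' is bijective
  have hadjA'l : adjoint (eA.symm : H →L[ℂ] H) ∘L adjoint A' = 1 := by
    rw [← adjoint_comp, hcomp1, hone]
  have hadjA'r : adjoint A' ∘L adjoint (eA.symm : H →L[ℂ] H) = 1 := by
    rw [← adjoint_comp, hcomp2, hone]
  have hadjA'inj : Function.Injective (adjoint A') := by
    intro u v huv
    have := congrArg (fun T : H →L[ℂ] H => T u) hadjA'l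
    have h2 := congrArg (fun T : H →L[ℂ] H => T v) hadjA'l
    simp only [comp_apply, one_apply] at this h2
    exact this.symm.trans ((congrArg (adjoint (eA.symm : H →L[ℂ] H)) huv).trans h2)
  -- Φ is bijective
  have hΦinj : Function.Injective Φ := by
    intro u v huv
    obtain ⟨yu, hyu⟩ := hB.2 u
    obtain ⟨yv, hyv⟩ := hB.2 v
    have : yu = yv := by
      rw [← hadj yu, ← hadj yv, hyu, hyv, huv]
    rw [← hyu, ← hyv, this]
  have hΦsurj : Function.Surjective Φ := by
    intro z
    refine ⟨B (adjoint A' z), ?_⟩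
    apply hadjA'inj
    exact hadj (adjoint A' z)
  let eΦ : H ≃L[ℂ] H := ContinuousLinearEquiv.ofBijective Φ
    (LinearMap.ker_eq_bot.mpr hΦinj) (LinearMap.range_eq_top.mpr hΦsurj)
  have heΦ : (eΦ : H →L[ℂ] H) = Φ := rfl
  refine ⟨adjoint (eΦ.symm : H →L[ℂ] H), ?_, ?_⟩
  · have : (eΦ.symm : H →L[ℂ] H) ∘L Φ = 1 := by ext x; simp [← heΦ]
    calc adjoint Φ * adjoint (eΦ.symm : H →L[ℂ] H)
        = adjoint ((eΦ.symm : H →L[ℂ] H) ∘L Φ) := by rw [adjoint_comp]; rfl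
      _ = 1 := by rw [this, hone]
  · have : Φ ∘L (eΦ.symm : H →L[ℂ] H) = 1 := by ext x; simp [← heΦ]
    calc adjoint (eΦ.symm : H →L[ℂ] H) * adjoint Φ
        = adjoint (Φ ∘L (eΦ.symm : H →L[ℂ] H)) := by rw [adjoint_comp]; rfl
      _ = 1 := by rw [this, hone]
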